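/- Let p be a polynomial on R^n with deg(p) < n/2, and suppose there exist a1,...,an, b with all ai ≠ 0 such that p(x) = 0 for every x ∈ {-1,1}^n not satisfying a1x1+...+anxn+b = 0 (i.e., the support of p on the hypercube lies in a skewed hyperplane). Then p(x) = 0 for all x ∈ {-1,1}^n. -/
import Mathlib

open Finset

private lemma flip_sum_eq_zero (n : ℕ) (p : MvPolynomial (Fin n) ℝ) (x₀ : Fin n → ℝ)
    (T : Finset (Fin n)) (hdeg : p.totalDegree < T.card) :
    ∑ S ∈ T.powerset, (-1 : ℝ) ^ S.card *
      MvPolynomial.eval (fun i => if i ∈ S then -x₀ i else x₀ i) p = 0 := by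
  simp_rw [MvPolynomial.eval_eq', Finset.mul_sum, Finset.sum_comm (s := T.powerset)]
  apply Finset.sum_eq_zero
  intro d hd
  -- there is i₀ ∈ T with d i₀ = 0
  have hdsum : ∑ i ∈ T, d i ≤ p.totalDegree := by
    have h1 : ∑ i ∈ T, d i ≤ ∑ i : Fin n, d i :=
      Finset.sum_le_sum_of_subset (Finset.subset_univ T)
    have h2 : ∑ i : Fin n, d i = d.sum fun _ m => m := by
      rw [Finsupp.sum]
      exact (Finset.sum_subset (Finset.subset_univ _) (by
        intro i _ hi
        simpa using Finsupp.notMem_support_iff.mp hi)).symm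
    have h3 := MvPolynomial.le_totalDegree hd
    omega
  have hzero : ∃ i₀ ∈ T, d i₀ = 0 := by
    by_contra hcon
    push_neg at hcon
    have : T.card ≤ ∑ i ∈ T, d i := by
      calc T.card = ∑ _i ∈ T, 1 := by simp
      _ ≤ ∑ i ∈ T, d i := Finset.sum_le_sum (fun i hi => Nat.one_le_iff_ne_zero.mpr (hcon i hi))
    omega
  obtain ⟨i₀, hi₀T, hi₀⟩ := hzero
  -- rewrite each summand, splitting the product over T and Tᶜ
  have hsummand : ∀ S ∈ T.powerset,
      (-1 : ℝ) ^ S.card * (MvPolynomial.coeff d p *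
        ∏ i : Fin n, (if i ∈ S then -x₀ i else x₀ i) ^ d i) =
      MvPolynomial.coeff d p * ((∏ i ∈ S, (-(-x₀ i) ^ d i)) * ∏ i ∈ T \ S, (x₀ i) ^ d i)
        * ∏ i ∈ Tᶜ, (x₀ i) ^ d i := by
    intro S hS
    rw [Finset.mem_powerset] at hS
    have hprodsplit : (∏ i : Fin n, (if i ∈ S then -x₀ i else x₀ i) ^ d i) =
        (∏ i ∈ T, (if i ∈ S then -x₀ i else x₀ i) ^ d i) * ∏ i ∈ Tᶜ, (x₀ i) ^ d i := by
      rw [← Finset.prod_mul_prod_compl T]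
      congr 1
      apply Finset.prod_congr rfl
      intro i hi
      rw [Finset.mem_compl] at hi
      have : i ∉ S := fun h => hi (hS h)
      simp [this]
    have hT : (∏ i ∈ T, (if i ∈ S then -x₀ i else x₀ i) ^ d i) =
        (∏ i ∈ S, (-x₀ i) ^ d i) * ∏ i ∈ T \ S, (x₀ i) ^ d i := by
      rw [← Finset.prod_sdiff hS]
      rw [mul_comm]
      congr 1
      · exact Finset.prod_congr rfl (fun i hi => by simp [hi])
      · exact Finset.prod_congr rfl (fun i hi => by
          rw [Finset.mem_sdiff] at hi; simp [hi.2])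
    have hsign : (-1 : ℝ) ^ S.card * ∏ i ∈ S, (-x₀ i) ^ d i =
        ∏ i ∈ S, (-(-x₀ i) ^ d i) := by
      rw [← Finset.prod_const, ← Finset.prod_mul_distrib]
      exact Finset.prod_congr rfl (fun i _ => by ring)
    rw [hprodsplit, hT, ← hsign]
    ring
  rw [Finset.sum_congr rfl hsummand]
  have hre : ∀ S ∈ T.powerset,
      MvPolynomial.coeff d p * ((∏ i ∈ S, (-(-x₀ i) ^ d i)) * ∏ i ∈ T \ S, (x₀ i) ^ d i)
        * ∏ i ∈ Tᶜ, (x₀ i) ^ d i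
      = (MvPolynomial.coeff d p * ∏ i ∈ Tᶜ, (x₀ i) ^ d i) *
        ((∏ i ∈ S, (-(-x₀ i) ^ d i)) * ∏ i ∈ T \ S, (x₀ i) ^ d i) := by
    intros; ring
  rw [Finset.sum_congr rfl hre, ← Finset.mul_sum, ← Finset.prod_add]
  have : ∏ i ∈ T, (-(-x₀ i) ^ d i + (x₀ i) ^ d i) = 0 :=
    Finset.prod_eq_zero hi₀T (by simp [hi₀])
  rw [this, mul_zero]

private lemma key_vanish (n : ℕ) (p : MvPolynomial (Fin n) ℝ) (x₀ : Fin n → ℝ)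
    (T : Finset (Fin n)) (hdeg : p.totalDegree < T.card)
    (hzero : ∀ S : Finset (Fin n), S ⊆ T → S.Nonempty →
      MvPolynomial.eval (fun i => if i ∈ S then -x₀ i else x₀ i) p = 0) :
    MvPolynomial.eval x₀ p = 0 := by
  have h := flip_sum_eq_zero n p x₀ T hdeg
  rw [Finset.sum_eq_single_of_mem ∅ (Finset.empty_mem_powerset T)] at h
  · simpa using h
  · intro S hS hSne
    rw [Finset.mem_powerset] at hS
    rw [hzero S hS (Finset.nonempty_iff_ne_empty.mpr hSne)]
    ring

theorem support_in_skewed_hyperplane_implies_vanishing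
    (n : ℕ) (hn : 1 ≤ n) (p : MvPolynomial (Fin n) ℝ)
    (hdeg : (p.totalDegree : ℝ) < n / 2)
    (a : Fin n → ℝ) (b : ℝ) (ha : ∀ i, a i ≠ 0)
    (hsupp : ∀ x : Fin n → ℝ, (∀ i, x i = 1 ∨ x i = -1) →
      (∑ i, a i * x i) + b ≠ 0 → MvPolynomial.eval x p = 0) :
    ∀ x : Fin n → ℝ, (∀ i, x i = 1 ∨ x i = -1) → MvPolynomial.eval x p = 0 := by
  intro x hx
  by_contra hpx
  -- x is on the hyperplane
  have h0 : (∑ i, a i * x i) + b = 0 := by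
    by_contra h
    exact hpx (hsupp x hx h)
  have hax : ∀ i, a i * x i ≠ 0 := by
    intro i
    rcases hx i with h | h <;> simp [h, ha i]
  -- abstract argument applied to a sign class T
  have main : ∀ T : Finset (Fin n), p.totalDegree < T.card →
      (∀ S : Finset (Fin n), S ⊆ T → S.Nonempty → ∑ i ∈ S, a i * x i ≠ 0) → False := by
    intro T hcard hsign
    apply hpx
    apply key_vanish n p x T hcard
    intro S hS hSne
    set y : Fin n → ℝ := fun i => if i ∈ S then -x i else x i with hy
    have hycube : ∀ i, y i = 1 ∨ y i = -1 := by
      intro i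
      simp only [hy]
      split
      · rcases hx i with h | h <;> simp [h]
      · exact hx i
    apply hsupp y hycube
    have hsumy : ∑ i, a i * y i = (∑ i, a i * x i) - 2 * ∑ i ∈ S, a i * x i := by
      have h1 : ∀ i ∈ Finset.univ, a i * y i
          = a i * x i - (if i ∈ S then 2 * (a i * x i) else 0) := by
        intro i _
        simp only [hy]
        split <;> ring
      rw [Finset.sum_congr rfl h1, Finset.sum_sub_distrib]
      congr 1
      rw [Finset.sum_ite_mem, Finset.univ_inter, Finset.mul_sum]
    rw [hsumy]
    have := hsign S hS hSne
    intro hcon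
    apply this
    linarith
  -- split coordinates by sign of a i * x i
  set Tp := Finset.univ.filter (fun i => 0 < a i * x i) with hTp
  set Tm := Finset.univ.filter (fun i => a i * x i < 0) with hTm
  have hcards : Tp.card + Tm.card = n := by
    have : Tm = Finset.univ.filter (fun i => ¬ 0 < a i * x i) := by
      apply Finset.filter_congr
      intro i _
      simp only [not_lt]
      constructor
      · intro h; linarith
      · intro h; cases lt_or_eq_of_le h with
        | inl h => exact h
        | inr h => exact absurd h (hax i)
    rw [this]
    rw [Finset.card_filter_add_card_filter_not]
    simp
  have h2deg : 2 * p.totalDegree < n := by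
    have : (2 * p.totalDegree : ℝ) < n := by
      push_cast at hdeg ⊢
      linarith
    exact_mod_cast this
  have hcase : p.totalDegree < Tp.card ∨ p.totalDegree < Tm.card := by omega
  rcases hcase with hc | hc
  · apply main Tp hc
    intro S hS hSne
    have hpos : 0 < ∑ i ∈ S, a i * x i := by
      apply Finset.sum_pos _ hSne
      intro i hi
      have := hS hi
      rw [hTp, Finset.mem_filter] at this
      exact this.2
    linarith
  · apply main Tm hc
    intro S hS hSne
    have hneg : ∑ i ∈ S, a i * x i < 0 := by
      apply Finset.sum_neg _ hSne
      intro i hi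
      have := hS hi
      rw [hTm, Finset.mem_filter] at this
      exact this.2
    linarith
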